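/- In the dying experts setting with all K! orderings, suppose expert e_j dies at the end of round t−1. For any two alive experts i, k ≠ j, there is a bijection between Π_i^t ∩ Π_j^{t−1} and Π_k^t ∩ Π_j^{t−1} preserving cumulative loss through round t−1; consequently ∑_{π ∈ Π_i^t ∩ Π_j^{t−1}} e^{−η L_π^{t−1}} = (1/|E_a^t|) ∑_{π ∈ Π_j^{t−1}} e^{−η L_π^{t−1}}. -/
import Mathlib


/-- **Symmetry of weight redistribution when an expert dies.**
`alive s` is the set of alive experts at round `s` (rounds `0, 1, …`), nested
and nonempty; `fa π s` is the first alive expert of ordering `π` at round `s`.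
Expert `j` dies at the end of round `t`, so `alive (t+1) = (alive t).erase j`.
For any alive experts `i, k` at round `t+1`, there is a loss-preserving
bijection between `Π_i^{t+1} ∩ Π_j^t` and `Π_k^{t+1} ∩ Π_j^t`; consequently
`∑_{π ∈ Π_i^{t+1} ∩ Π_j^t} e^{-η L_π} = (1/|alive (t+1)|) ∑_{π ∈ Π_j^t} e^{-η L_π}`,
where `L_π` is the cumulative loss through round `t`. -/
theorem dying_symmetry (K : ℕ)
    (alive : ℕ → Finset (Fin K))
    (hne : ∀ s, (alive s).Nonempty)
    (hnested : ∀ s, alive (s + 1) ⊆ alive s)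
    (fa : Equiv.Perm (Fin K) → ℕ → Fin K)
    (hfa : ∀ π s, fa π s ∈ alive s ∧ ∀ e ∈ alive s, π.symm (fa π s) ≤ π.symm e)
    (l : Fin K → ℕ → ℝ) (η : ℝ) (t : ℕ) (j i k : Fin K)
    (hj : j ∈ alive t) (hdie : alive (t + 1) = (alive t).erase j)
    (hi : i ∈ alive (t + 1)) (hk : k ∈ alive (t + 1))
    (L : Equiv.Perm (Fin K) → ℝ)
    (hL : ∀ π, L π = ∑ s ∈ Finset.range (t + 1), l (fa π s) s) :
    (∃ f : Equiv.Perm (Fin K) → Equiv.Perm (Fin K),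
        Set.BijOn f {π | fa π (t + 1) = i ∧ fa π t = j}
          {π | fa π (t + 1) = k ∧ fa π t = j} ∧
        ∀ π, fa π (t + 1) = i → fa π t = j → L (f π) = L π) ∧
    (∑ π ∈ Finset.univ.filter
        (fun π : Equiv.Perm (Fin K) => fa π (t + 1) = i ∧ fa π t = j),
        Real.exp (-η * L π))
      = (1 / (alive (t + 1)).card) *
        ∑ π ∈ Finset.univ.filter (fun π : Equiv.Perm (Fin K) => fa π t = j),
          Real.exp (-η * L π) := by
  classical
  have hmono : ∀ s s', s ≤ s' → alive s' ⊆ alive s := by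
    intro s s' h
    induction h with
    | refl => exact subset_rfl
    | step h ih => exact fun x hx => ih (hnested _ hx)
  have huniq : ∀ (π : Equiv.Perm (Fin K)) s e, e ∈ alive s →
      (∀ e' ∈ alive s, π.symm e ≤ π.symm e') → fa π s = e := by
    intro π s e he hmin
    have h1 := (hfa π s).2 e he
    have h2 := hmin _ (hfa π s).1
    exact π.symm.injective (le_antisymm h1 h2)
  have hsymm : ∀ (a b : Fin K) (π : Equiv.Perm (Fin K)) (e : Fin K),
      (Equiv.swap a b * π).symm e = π.symm (Equiv.swap a b e) := by
    intro a b π e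
    rw [Equiv.symm_apply_eq]
    simp [Equiv.Perm.mul_apply]
  have key : ∀ (a b : Fin K), a ∈ alive (t+1) → b ∈ alive (t+1) →
      ∀ π : Equiv.Perm (Fin K), fa π (t+1) = a → fa π t = j →
      (∀ s, s ≤ t → fa (Equiv.swap a b * π) s = fa π s) ∧
      fa (Equiv.swap a b * π) (t+1) = b := by
    intro a b ha hb π hfa1 hfat
    have haj : a ≠ j := (Finset.mem_erase.mp (hdie ▸ ha)).1
    have hbj : b ≠ j := (Finset.mem_erase.mp (hdie ▸ hb)).1
    have hat : a ∈ alive t := hnested t ha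
    have hbt : b ∈ alive t := hnested t hb
    have hja : π.symm j < π.symm a := by
      have := (hfa π t).2 a hat
      rw [hfat] at this
      exact lt_of_le_of_ne this (fun h => haj (π.symm.injective h.symm))
    have hjb : π.symm j < π.symm b := by
      have := (hfa π t).2 b hbt
      rw [hfat] at this
      exact lt_of_le_of_ne this (fun h => hbj (π.symm.injective h.symm))
    constructor
    · intro s hs
      have hjs : j ∈ alive s := hmono s t hs hj
      have has : a ∈ alive s := hmono s (t+1) (by omega) ha
      have hbs : b ∈ alive s := hmono s (t+1) (by omega) hb
      set c := fa π s with hc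
      have hcs : c ∈ alive s := (hfa π s).1
      have hcj : π.symm c ≤ π.symm j := (hfa π s).2 j hjs
      have hca : c ≠ a := fun h => absurd (h ▸ hcj) (not_le.mpr hja)
      have hcb : c ≠ b := fun h => absurd (h ▸ hcj) (not_le.mpr hjb)
      refine huniq _ s c hcs ?_
      intro e' he'
      rw [hsymm, hsymm, Equiv.swap_apply_of_ne_of_ne hca hcb]
      rcases eq_or_ne e' a with rfl | hea
      · rw [Equiv.swap_apply_left]; exact (hfa π s).2 b hbs
      rcases eq_or_ne e' b with rfl | heb
      · rw [Equiv.swap_apply_right]; exact (hfa π s).2 a has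
      · rw [Equiv.swap_apply_of_ne_of_ne hea heb]; exact (hfa π s).2 e' he'
    · refine huniq _ (t+1) b hb ?_
      intro e' he'
      rw [hsymm, hsymm, Equiv.swap_apply_right]
      have hmin := (hfa π (t+1)).2
      rw [hfa1] at hmin
      rcases eq_or_ne e' a with rfl | hea
      · rw [Equiv.swap_apply_left]; exact hmin b hb
      rcases eq_or_ne e' b with rfl | heb
      · rw [Equiv.swap_apply_right]
      · rw [Equiv.swap_apply_of_ne_of_ne hea heb]; exact hmin e' he'
  have keyL : ∀ (a b : Fin K), a ∈ alive (t+1) → b ∈ alive (t+1) →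
      ∀ π : Equiv.Perm (Fin K), fa π (t+1) = a → fa π t = j →
      L (Equiv.swap a b * π) = L π := by
    intro a b ha hb π h1 h2
    rw [hL, hL]
    refine Finset.sum_congr rfl (fun s hs => ?_)
    rw [(key a b ha hb π h1 h2).1 s (by
      have := Finset.mem_range.mp hs; omega)]
  have hinv : ∀ (a b : Fin K) (π : Equiv.Perm (Fin K)),
      Equiv.swap a b * (Equiv.swap a b * π) = π := by
    intro a b π
    rw [← mul_assoc, Equiv.swap_mul_self, one_mul]
  -- the bijection part
  have hbij : ∀ (a b : Fin K), a ∈ alive (t+1) → b ∈ alive (t+1) →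
      Set.BijOn (fun π => Equiv.swap a b * π)
        {π | fa π (t + 1) = a ∧ fa π t = j}
        {π | fa π (t + 1) = b ∧ fa π t = j} := by
    intro a b ha hb
    have hmapsto : ∀ (a b : Fin K), a ∈ alive (t+1) → b ∈ alive (t+1) →
        Set.MapsTo (fun π => Equiv.swap a b * π)
          {π | fa π (t + 1) = a ∧ fa π t = j}
          {π | fa π (t + 1) = b ∧ fa π t = j} := by
      intro a b ha hb π hπ
      obtain ⟨h1, h2⟩ := hπ
      obtain ⟨hall, hnew⟩ := key a b ha hb π h1 h2
      exact ⟨hnew, by rw [hall t le_rfl]; exact h2⟩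
    have hIO : Set.InvOn (fun π => Equiv.swap a b * π) (fun π => Equiv.swap a b * π)
        {π | fa π (t + 1) = a ∧ fa π t = j} {π | fa π (t + 1) = b ∧ fa π t = j} :=
      ⟨fun π _ => hinv a b π, fun π _ => hinv a b π⟩
    refine hIO.bijOn (hmapsto a b ha hb) ?_
    have := hmapsto b a hb ha
    simpa [Equiv.swap_comm a b] using this
  constructor
  · exact ⟨fun π => Equiv.swap i k * π, hbij i k hi hk,
      fun π h1 h2 => keyL i k hi hk π h1 h2⟩
  -- the sum part
  · set w : Equiv.Perm (Fin K) → ℝ := fun π => Real.exp (-η * L π) with hw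
    have hSeq : ∀ m ∈ alive (t+1),
        (∑ π ∈ Finset.univ.filter
          (fun π : Equiv.Perm (Fin K) => fa π (t+1) = m ∧ fa π t = j), w π)
        = ∑ π ∈ Finset.univ.filter
          (fun π : Equiv.Perm (Fin K) => fa π (t+1) = i ∧ fa π t = j), w π := by
      intro m hm
      refine Finset.sum_nbij' (fun π => Equiv.swap m i * π)
        (fun π => Equiv.swap m i * π) ?_ ?_ ?_ ?_ ?_
      · intro π hπ
        simp only [Finset.mem_filter, Finset.mem_univ, true_and] at hπ ⊢
        obtain ⟨hall, hnew⟩ := key m i hm hi π hπ.1 hπ.2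
        exact ⟨hnew, by rw [hall t le_rfl]; exact hπ.2⟩
      · intro π hπ
        simp only [Finset.mem_filter, Finset.mem_univ, true_and] at hπ ⊢
        have : Equiv.swap m i * π = Equiv.swap i m * π := by
          rw [Equiv.swap_comm]
        rw [this]
        obtain ⟨hall, hnew⟩ := key i m hi hm π hπ.1 hπ.2
        exact ⟨hnew, by rw [hall t le_rfl]; exact hπ.2⟩
      · intro π _; exact hinv m i π
      · intro π _; exact hinv m i π
      · intro π hπ
        simp only [Finset.mem_filter, Finset.mem_univ, true_and] at hπ
        rw [hw]
        simp only []
        rw [keyL m i hm hi π hπ.1 hπ.2]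
    have hfiber : (∑ m ∈ alive (t+1), ∑ π ∈ (Finset.univ.filter
          (fun π : Equiv.Perm (Fin K) => fa π t = j)).filter
          (fun π => fa π (t+1) = m), w π)
        = ∑ π ∈ Finset.univ.filter
          (fun π : Equiv.Perm (Fin K) => fa π t = j), w π := by
      refine Finset.sum_fiberwise_of_maps_to ?_ w
      intro π _
      exact (hfa π (t+1)).1
    have hrw : ∀ m : Fin K, (Finset.univ.filter
          (fun π : Equiv.Perm (Fin K) => fa π t = j)).filter
          (fun π => fa π (t+1) = m)
        = Finset.univ.filter
          (fun π : Equiv.Perm (Fin K) => fa π (t+1) = m ∧ fa π t = j) := by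
      intro m
      rw [Finset.filter_filter]
      exact Finset.filter_congr (fun π _ => by tauto)
    have hcard : ((alive (t+1)).card : ℝ) ≠ 0 := by
      exact_mod_cast Finset.card_ne_zero_of_mem hi
    rw [eq_comm, ← hfiber]
    have : (∑ m ∈ alive (t+1), ∑ π ∈ (Finset.univ.filter
          (fun π : Equiv.Perm (Fin K) => fa π t = j)).filter
          (fun π => fa π (t+1) = m), w π)
        = (alive (t+1)).card * ∑ π ∈ Finset.univ.filter
          (fun π : Equiv.Perm (Fin K) => fa π (t+1) = i ∧ fa π t = j), w π := by
      rw [Finset.sum_congr rfl (fun m hm => by rw [hrw m, hSeq m hm])]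
      rw [Finset.sum_const, nsmul_eq_mul]
    rw [this]
    field_simp
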